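/- Let μ be a probability measure on ℝ^d with μ(|·|^q) < ∞ for some q > p > 0, and let α ∈ (0,1). For T ≥ 2 define 𝒦_α(T) := ∑_{n≥0} 2^{pn} ∑_{ℓ≥0} 2^{−pℓ} ∑_{F ∈ 𝒫_ℓ} min{ μ(2ⁿF ∩ B_n), T^{−1/2} μ(2ⁿF ∩ B_n)^α }. Set γ := max{ α, 1 − p/d } ∈ (0,1). Then there is a constant C > 0 (depending only on p, q, d, α and μ) such that for all T > 2: 𝒦_α(T) ≤ C T^{ −(1 − max{γ, p/q}) / (2(1−α)) } · A · B, where A := log T if γq = p and A := 1 otherwise, and B := log T if p = (1−α)d and B := 1 otherwise. -/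

import Mathlib

set_option maxHeartbeats 1000000


open MeasureTheory Filter ENNReal Topology

noncomputable section

/-- The optimal transport cost `𝒯_p(ν₀, ν₁) = inf_{π ∈ 𝒞(ν₀,ν₁)} ∫ |x-y|^p dπ(x,y)`. -/
def Tcost {d : ℕ} (p : ℝ) (ν₀ ν₁ : Measure (EuclideanSpace ℝ (Fin d))) : ℝ≥0∞ :=
  ⨅ (π : Measure (EuclideanSpace ℝ (Fin d) × EuclideanSpace ℝ (Fin d)))
    (_ : π.map Prod.fst = ν₀) (_ : π.map Prod.snd = ν₁),
      ∫⁻ z, ENNReal.ofReal (‖z.1 - z.2‖ ^ p) ∂π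

/-- The cube of the natural partition `𝒫_ℓ` of `(-1,1]^d` into `2^{dℓ}` dyadic cubes of
side-length `2·2^{-ℓ}`, indexed by `k : Fin d → Fin (2^ℓ)`. -/
def dyadicCube (d ℓ : ℕ) (k : Fin d → Fin (2 ^ ℓ)) : Set (EuclideanSpace ℝ (Fin d)) :=
  {x | ∀ i, x i ∈ Set.Ioc ((-1 : ℝ) + 2 * (2 : ℝ) ^ (-(ℓ : ℝ)) * (k i : ℝ))
      ((-1 : ℝ) + 2 * (2 : ℝ) ^ (-(ℓ : ℝ)) * ((k i : ℝ) + 1))}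

/-- The sets `B₀ = (-1,1]^d` and `B_n = (-2ⁿ,2ⁿ]^d \ (-2^{n-1},2^{n-1}]^d` for `n ≥ 1`. -/
def annulus (d n : ℕ) : Set (EuclideanSpace ℝ (Fin d)) :=
  if n = 0 then {x | ∀ i, x i ∈ Set.Ioc (-1 : ℝ) 1}
  else {x | ∀ i, x i ∈ Set.Ioc (-((2 : ℝ) ^ n)) ((2 : ℝ) ^ n)} \
    {x | ∀ i, x i ∈ Set.Ioc (-((2 : ℝ) ^ (n - 1))) ((2 : ℝ) ^ (n - 1))}

/-- The scaled set `c F = {c x : x ∈ F}`. -/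
def scaleSet {d : ℕ} (c : ℝ) (F : Set (EuclideanSpace ℝ (Fin d))) :
    Set (EuclideanSpace ℝ (Fin d)) :=
  (fun x => c • x) '' F


lemma rpow_mul_nat (c : ℝ) (n : ℕ) : (2:ℝ) ^ (c * n) = ((2:ℝ) ^ c) ^ n := by
  rw [← Real.rpow_natCast ((2:ℝ)^c) n, ← Real.rpow_mul (by norm_num)]

lemma two_rpow_pos (c : ℝ) : (0:ℝ) < 2 ^ c := Real.rpow_pos_of_pos (by norm_num) c

lemma two_rpow_lt_one {a : ℝ} (ha : 0 < a) : (2:ℝ) ^ (-a) < 1 := by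
  rw [Real.rpow_lt_one_iff_of_pos (by norm_num)]
  left; constructor <;> [norm_num; linarith]

/-- Split lemma: head + geometric tail. -/
lemma tsum_min_split (x y a c : ℝ) (hx : 0 ≤ x) (hy : 0 ≤ y) (ha : 0 < a) (N : ℕ) :
    ∑' n : ℕ, ENNReal.ofReal (min (x * 2 ^ (-(a * n))) (y * 2 ^ (c * n))) ≤
      ENNReal.ofReal ((∑ i ∈ Finset.range N, y * 2 ^ (c * i)) +
        x * 2 ^ (-(a * N)) * (1 - 2 ^ (-a))⁻¹) := by
  have hgeo : (2:ℝ) ^ (-a) < 1 := two_rpow_lt_one ha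
  have hgeo0 : (0:ℝ) ≤ 2 ^ (-a) := (two_rpow_pos _).le
  set g : ℕ → ℝ≥0∞ := fun n =>
    if n < N then ENNReal.ofReal (y * 2 ^ (c * n)) else ENNReal.ofReal (x * 2 ^ (-(a * n)))
    with hg
  have hle : ∀ n : ℕ, ENNReal.ofReal (min (x * 2 ^ (-(a * (n:ℝ)))) (y * 2 ^ (c * (n:ℝ)))) ≤ g n := by
    intro n
    by_cases h : n < N
    · simp only [hg, h, if_true]
      exact ENNReal.ofReal_le_ofReal (min_le_right _ _)
    · simp only [hg, h, if_false]
      exact ENNReal.ofReal_le_ofReal (min_le_left _ _)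
  refine le_trans (ENNReal.tsum_le_tsum hle) ?_
  have hsplit : ∑' n, g n = ∑ i ∈ Finset.range N, g i + ∑' i : ℕ, g (i + N) :=
    (Summable.sum_add_tsum_nat_add' (f := g) (k := N) ENNReal.summable).symm
  rw [hsplit]
  have hhead : ∑ i ∈ Finset.range N, g i = ENNReal.ofReal (∑ i ∈ Finset.range N, y * 2 ^ (c * i)) := by
    rw [ENNReal.ofReal_sum_of_nonneg (fun i _ => by positivity)]
    refine Finset.sum_congr rfl fun i hi => ?_
    simp [hg, Finset.mem_range.mp hi]
  have htail : ∑' i : ℕ, g (i + N) ≤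
      ENNReal.ofReal (x * 2 ^ (-(a * N)) * (1 - 2 ^ (-a))⁻¹) := by
    have h1 : ∀ i : ℕ, g (i + N) = ENNReal.ofReal (x * 2 ^ (-(a * N))) *
        ENNReal.ofReal ((2:ℝ) ^ (-a)) ^ i := by
      intro i
      have hnlt : ¬ (i + N < N) := by omega
      simp only [hg, hnlt, if_false]
      rw [← ENNReal.ofReal_pow hgeo0, ← ENNReal.ofReal_mul (by positivity)]
      congr 1
      rw [← rpow_mul_nat (-a) i, mul_assoc, ← Real.rpow_add (by norm_num)]
      congr 1
      push_cast; ring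
    calc ∑' i : ℕ, g (i + N)
        = ENNReal.ofReal (x * 2 ^ (-(a * N))) * ∑' i : ℕ, ENNReal.ofReal ((2:ℝ) ^ (-a)) ^ i := by
          rw [← ENNReal.tsum_mul_left]; exact tsum_congr h1
      _ = ENNReal.ofReal (x * 2 ^ (-(a * N))) * (1 - ENNReal.ofReal ((2:ℝ) ^ (-a)))⁻¹ := by
          rw [ENNReal.tsum_geometric]
      _ ≤ ENNReal.ofReal (x * 2 ^ (-(a * N)) * (1 - 2 ^ (-a))⁻¹) := by
          have h2 : (1 - ENNReal.ofReal ((2:ℝ) ^ (-a)))⁻¹ = ENNReal.ofReal ((1 - 2 ^ (-a))⁻¹) := by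
            rw [ENNReal.ofReal_inv_of_pos (by linarith), ← ENNReal.ofReal_one,
              ← ENNReal.ofReal_sub _ hgeo0]
          rw [h2, ← ENNReal.ofReal_mul (by positivity)]
  calc ∑ i ∈ Finset.range N, g i + ∑' i : ℕ, g (i + N)
      ≤ ENNReal.ofReal (∑ i ∈ Finset.range N, y * 2 ^ (c * i)) +
        ENNReal.ofReal (x * 2 ^ (-(a * N)) * (1 - 2 ^ (-a))⁻¹) := by
        rw [hhead]; exact add_le_add le_rfl htail
    _ = _ := (ENNReal.ofReal_add (by positivity)
        (mul_nonneg (by positivity) (inv_nonneg.mpr (by linarith)))).symm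

/-- c < 0 case : pure geometric bound by y. -/
lemma tsum_min_neg (x y a c : ℝ) (hy : 0 ≤ y) (hc : c < 0) :
    ∑' n : ℕ, ENNReal.ofReal (min (x * 2 ^ (-(a * n))) (y * 2 ^ (c * n))) ≤
      ENNReal.ofReal (y * (1 - 2 ^ c)⁻¹) := by
  have hgeo : (2:ℝ) ^ c < 1 := by
    have := two_rpow_lt_one (a := -c) (by linarith); rwa [neg_neg] at this
  have hgeo0 : (0:ℝ) ≤ 2 ^ c := (two_rpow_pos _).le
  have h1 : ∀ n : ℕ, ENNReal.ofReal (min (x * 2 ^ (-(a * (n:ℝ)))) (y * 2 ^ (c * (n:ℝ)))) ≤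
      ENNReal.ofReal y * ENNReal.ofReal ((2:ℝ) ^ c) ^ n := by
    intro n
    rw [← ENNReal.ofReal_pow hgeo0, ← ENNReal.ofReal_mul hy]
    refine ENNReal.ofReal_le_ofReal (le_trans (min_le_right _ _) ?_)
    rw [rpow_mul_nat c n]
  calc ∑' n : ℕ, ENNReal.ofReal (min (x * 2 ^ (-(a * (n:ℝ)))) (y * 2 ^ (c * (n:ℝ))))
      ≤ ∑' n : ℕ, ENNReal.ofReal y * ENNReal.ofReal ((2:ℝ) ^ c) ^ n := ENNReal.tsum_le_tsum h1
    _ = ENNReal.ofReal y * (1 - ENNReal.ofReal ((2:ℝ) ^ c))⁻¹ := by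
        rw [ENNReal.tsum_mul_left, ENNReal.tsum_geometric]
    _ ≤ ENNReal.ofReal (y * (1 - 2 ^ c)⁻¹) := by
        have h2 : (1 - ENNReal.ofReal ((2:ℝ) ^ c))⁻¹ = ENNReal.ofReal ((1 - 2 ^ c)⁻¹) := by
          rw [ENNReal.ofReal_inv_of_pos (by linarith), ← ENNReal.ofReal_one,
            ← ENNReal.ofReal_sub _ hgeo0]
        rw [h2, ← ENNReal.ofReal_mul hy]

lemma two_logb (z : ℝ) (hz : 0 < z) : (2:ℝ) ^ (Real.logb 2 z) = z :=
  Real.rpow_logb (by norm_num) (by norm_num) hz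

lemma rpow_base_le {u v : ℝ} (h : u ≤ v) : (2:ℝ) ^ u ≤ 2 ^ v :=
  Real.rpow_le_rpow_left_iff (by norm_num) |>.mpr h

lemma rpow_interp (x y t : ℝ) (hx : 0 < x) (hy : 0 < y) :
    x * (y / x) ^ t = x ^ (1 - t) * y ^ t := by
  rw [Real.div_rpow hy.le hx.le, Real.rpow_sub hx, Real.rpow_one]
  ring

/-- c > 0 case: interpolation bound. -/
lemma tsum_min_pos (x y a c : ℝ) (hx : 0 < x) (hy : 0 < y) (ha : 0 < a) (hc : 0 < c) :
    ∑' n : ℕ, ENNReal.ofReal (min (x * 2 ^ (-(a * n))) (y * 2 ^ (c * n))) ≤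
      ENNReal.ofReal ((2 ^ c * (2 ^ c - 1)⁻¹ + (1 - 2 ^ (-a))⁻¹) *
        (x ^ (c / (a + c)) * y ^ (a / (a + c)))) := by
  have hs : 0 < a + c := by linarith
  have hxy : 0 < x / y := div_pos hx hy
  set w : ℝ := Real.logb 2 (x / y) with hw
  set r : ℝ := w / (a + c) with hr
  set N : ℕ := ⌈r⌉₊ with hN
  have hrN : r ≤ N := Nat.le_ceil r
  have h2c1 : (1:ℝ) < 2 ^ c := by
    rw [show (1:ℝ) = (2:ℝ) ^ (0:ℝ) by simp]
    exact Real.rpow_lt_rpow_left_iff (by norm_num) |>.mpr hc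
  have hne : (2:ℝ) ^ c - 1 ≠ 0 := by linarith
  have hga : (2:ℝ) ^ (-a) < 1 := two_rpow_lt_one ha
  set G : ℝ := x ^ (c / (a + c)) * y ^ (a / (a + c)) with hG
  have hG0 : 0 < G := by positivity
  -- tail estimate
  have htail : x * 2 ^ (-(a * N)) ≤ G := by
    have h1 : (2:ℝ) ^ (-(a * (N:ℝ))) ≤ 2 ^ (-(a * r)) := by
      apply rpow_base_le; nlinarith
    have h2 : (2:ℝ) ^ (-(a * r)) = (x / y) ^ (-(a / (a + c))) := by
      rw [← two_logb (x/y) hxy, ← Real.rpow_mul (by norm_num)]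
      congr 1
      rw [hr]; ring
    have h3 : x * (x / y) ^ (-(a / (a + c))) = G := by
      rw [Real.rpow_neg hxy.le, ← Real.inv_rpow hxy.le, inv_div,
        rpow_interp x y _ hx hy, hG,
        show (1:ℝ) - a/(a+c) = c/(a+c) by field_simp; ring]
    calc x * 2 ^ (-(a * (N:ℝ))) ≤ x * 2 ^ (-(a * r)) :=
          mul_le_mul_of_nonneg_left h1 hx.le
      _ = G := by rw [h2]; exact h3
  -- head estimate
  have hyG : y * (x / y) ^ (c / (a + c)) = G := by
    rw [rpow_interp y x _ hy hx, hG,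
      show (1:ℝ) - c/(a+c) = a/(a+c) by field_simp; ring]
    ring
  have hhead : ∑ i ∈ Finset.range N, y * 2 ^ (c * (i:ℝ)) ≤ 2 ^ c * (2 ^ c - 1)⁻¹ * G := by
    rcases Nat.eq_zero_or_pos N with h0 | hNpos
    · rw [h0]
      simp only [Finset.range_zero, Finset.sum_empty]
      exact mul_nonneg (mul_nonneg (two_rpow_pos c).le (inv_nonneg.mpr (by linarith))) hG0.le
    · have hN1r : ((N:ℝ) - 1) < r := by
        have h := Nat.lt_ceil.mp (show N - 1 < ⌈r⌉₊ by omega)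
        have : ((N - 1 : ℕ) : ℝ) = (N:ℝ) - 1 := by
          push_cast [Nat.cast_sub hNpos]; ring
        linarith [this ▸ h]
      have hpow : ((2:ℝ) ^ c) ^ N ≤ 2 ^ c * (x / y) ^ (c / (a + c)) := by
        have h1 : ((2:ℝ) ^ c) ^ N = 2 ^ c * 2 ^ (c * ((N:ℝ) - 1)) := by
          rw [← rpow_mul_nat c N, ← Real.rpow_add (by norm_num)]
          congr 1; ring
        have h2 : (2:ℝ) ^ (c * ((N:ℝ) - 1)) ≤ 2 ^ (c * r) := by
          apply rpow_base_le; nlinarith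
        have h3 : (2:ℝ) ^ (c * r) = (x / y) ^ (c / (a + c)) := by
          rw [← two_logb (x/y) hxy, ← Real.rpow_mul (by norm_num)]
          congr 1
          rw [hr]; ring
        rw [h1, ← h3]
        exact mul_le_mul_of_nonneg_left h2 (two_rpow_pos c).le
      have hgeom : ∑ i ∈ Finset.range N, y * 2 ^ (c * (i:ℝ)) =
          y * ((((2:ℝ) ^ c) ^ N - 1) / (2 ^ c - 1)) := by
        rw [← Finset.mul_sum]
        congr 1
        rw [← geom_sum_eq (by linarith)]
        exact Finset.sum_congr rfl fun i _ => rpow_mul_nat c i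
      rw [hgeom]
      calc y * ((((2:ℝ) ^ c) ^ N - 1) / (2 ^ c - 1))
          ≤ y * ((2 ^ c * (x / y) ^ (c / (a + c))) / (2 ^ c - 1)) := by
            gcongr
            · linarith
        _ = 2 ^ c * (2 ^ c - 1)⁻¹ * G := by rw [← hyG]; field_simp
  calc ∑' n : ℕ, ENNReal.ofReal (min (x * 2 ^ (-(a * n))) (y * 2 ^ (c * n)))
      ≤ ENNReal.ofReal ((∑ i ∈ Finset.range N, y * 2 ^ (c * i)) +
        x * 2 ^ (-(a * N)) * (1 - 2 ^ (-a))⁻¹) := tsum_min_split x y a c hx.le hy.le ha N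
    _ ≤ _ := by
        apply ENNReal.ofReal_le_ofReal
        have hinv : (0:ℝ) ≤ (1 - 2 ^ (-a))⁻¹ := inv_nonneg.mpr (by linarith)
        calc (∑ i ∈ Finset.range N, y * 2 ^ (c * (i:ℝ))) + x * 2 ^ (-(a * N)) * (1 - 2 ^ (-a))⁻¹
            ≤ 2 ^ c * (2 ^ c - 1)⁻¹ * G + G * (1 - 2 ^ (-a))⁻¹ :=
              add_le_add hhead (mul_le_mul_of_nonneg_right htail hinv)
          _ = _ := by ring

/-- c = 0 case: logarithmic bound. -/
lemma tsum_min_zero (x y a : ℝ) (hx : 0 < x) (hy : 0 < y) (ha : 0 < a) :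
    ∑' n : ℕ, ENNReal.ofReal (min (x * 2 ^ (-(a * n))) (y * 2 ^ ((0:ℝ) * n))) ≤
      ENNReal.ofReal (((a * Real.log 2)⁻¹ + 1 + (1 - 2 ^ (-a))⁻¹) *
        (y * (1 + max 0 (Real.log (x / y))))) := by
  have hxy : 0 < x / y := div_pos hx hy
  have hlog2 : (0:ℝ) < Real.log 2 := Real.log_pos (by norm_num)
  set r : ℝ := Real.logb 2 (x / y) / a with hr
  set N : ℕ := ⌈r⌉₊ with hN
  have hrN : r ≤ N := Nat.le_ceil r
  have hga : (2:ℝ) ^ (-a) < 1 := two_rpow_lt_one ha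
  have hinv : (0:ℝ) ≤ (1 - 2 ^ (-a))⁻¹ := inv_nonneg.mpr (by linarith)
  set m : ℝ := max 0 (Real.log (x / y)) with hm
  have hm0 : (0:ℝ) ≤ m := le_max_left _ _
  -- tail
  have htail : x * 2 ^ (-(a * N)) ≤ y := by
    have h1 : (2:ℝ) ^ (-(a * (N:ℝ))) ≤ 2 ^ (-(a * r)) := by
      apply rpow_base_le; nlinarith
    have h2 : (2:ℝ) ^ (-(a * r)) = (x / y)⁻¹ := by
      rw [← two_logb (x/y) hxy, ← Real.rpow_neg_one (2 ^ Real.logb 2 (x/y)),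
        ← Real.rpow_mul (by norm_num)]
      congr 1
      rw [hr]; field_simp
    calc x * 2 ^ (-(a * (N:ℝ))) ≤ x * 2 ^ (-(a * r)) := mul_le_mul_of_nonneg_left h1 hx.le
      _ = x * (x / y)⁻¹ := by rw [h2]
      _ = y := by field_simp
  -- head count
  have hNle : (N:ℝ) ≤ (a * Real.log 2)⁻¹ * m + 1 := by
    rcases le_or_gt r 0 with h0 | h0
    · have : N = 0 := Nat.ceil_eq_zero.mpr h0
      rw [this]
      have : (0:ℝ) ≤ (a * Real.log 2)⁻¹ * m := by positivity
      push_cast; linarith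
    · have h1 : (N:ℝ) < r + 1 := by
        rw [hN]; exact Nat.ceil_lt_add_one h0.le
      have h2 : r ≤ (a * Real.log 2)⁻¹ * m := by
        have hlm : Real.log (x / y) ≤ m := le_max_right _ _
        rw [hr, Real.logb, div_div]
        rw [div_eq_inv_mul, mul_comm (Real.log 2) a]
        exact mul_le_mul_of_nonneg_left hlm (by positivity)
      linarith
  calc ∑' n : ℕ, ENNReal.ofReal (min (x * 2 ^ (-(a * n))) (y * 2 ^ ((0:ℝ) * n)))
      ≤ ENNReal.ofReal ((∑ i ∈ Finset.range N, y * 2 ^ ((0:ℝ) * i)) +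
        x * 2 ^ (-(a * N)) * (1 - 2 ^ (-a))⁻¹) := tsum_min_split x y a 0 hx.le hy.le ha N
    _ ≤ _ := by
        apply ENNReal.ofReal_le_ofReal
        have hhead : (∑ i ∈ Finset.range N, y * 2 ^ ((0:ℝ) * (i:ℝ))) = N * y := by
          rw [Finset.sum_congr rfl fun i _ => by rw [zero_mul, Real.rpow_zero, mul_one]]
          simp [mul_comm]
        rw [hhead]
        have h3 : x * 2 ^ (-(a * N)) * (1 - 2 ^ (-a))⁻¹ ≤ y * (1 - 2 ^ (-a))⁻¹ :=
          mul_le_mul_of_nonneg_right htail hinv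
        have h4 : (N:ℝ) * y ≤ ((a * Real.log 2)⁻¹ * m + 1) * y :=
          mul_le_mul_of_nonneg_right hNle hy.le
        have hil : (0:ℝ) ≤ (a * Real.log 2)⁻¹ := by positivity
        nlinarith [mul_nonneg hy.le hm0, mul_nonneg (mul_nonneg hil hy.le) hm0,
          mul_nonneg hinv (mul_nonneg hy.le hm0)]

lemma measurableSet_forall_Ioc (d : ℕ) (a b : Fin d → ℝ) :
    MeasurableSet {x : EuclideanSpace ℝ (Fin d) | ∀ i, x i ∈ Set.Ioc (a i) (b i)} := by
  have : {x : EuclideanSpace ℝ (Fin d) | ∀ i, x i ∈ Set.Ioc (a i) (b i)} =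
      ⋂ i, (fun x : EuclideanSpace ℝ (Fin d) => x i) ⁻¹' (Set.Ioc (a i) (b i)) := by
    ext x; simp [Set.mem_iInter]
  rw [this]
  exact MeasurableSet.iInter fun i => ((continuous_apply i).comp (PiLp.continuous_ofLp 2 _)).measurable measurableSet_Ioc

lemma measurableSet_dyadicCube (d ℓ : ℕ) (k : Fin d → Fin (2 ^ ℓ)) :
    MeasurableSet (dyadicCube d ℓ k) := measurableSet_forall_Ioc d _ _

lemma measurableSet_annulus (d n : ℕ) : MeasurableSet (annulus d n) := by
  unfold annulus
  split
  · exact measurableSet_forall_Ioc d _ _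
  · exact (measurableSet_forall_Ioc d _ _).diff (measurableSet_forall_Ioc d _ _)

lemma scaleSet_eq_preimage {d : ℕ} (c : ℝ) (hc : c ≠ 0) (F : Set (EuclideanSpace ℝ (Fin d))) :
    scaleSet c F = (fun x : EuclideanSpace ℝ (Fin d) => c⁻¹ • x) ⁻¹' F := by
  ext x
  simp only [scaleSet, Set.mem_image, Set.mem_preimage]
  constructor
  · rintro ⟨y, hy, rfl⟩
    rwa [smul_smul, inv_mul_cancel₀ hc, one_smul]
  · intro h
    exact ⟨c⁻¹ • x, h, by rw [smul_smul, mul_inv_cancel₀ hc, one_smul]⟩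

lemma measurableSet_scaleSet {d : ℕ} {c : ℝ} (hc : c ≠ 0) {F : Set (EuclideanSpace ℝ (Fin d))}
    (hF : MeasurableSet F) : MeasurableSet (scaleSet c F) := by
  rw [scaleSet_eq_preimage c hc F]
  exact hF.preimage (continuous_const_smul _).measurable

lemma dyadicCube_disjoint (d ℓ : ℕ) :
    Pairwise (Function.onFun Disjoint (dyadicCube d ℓ)) := by
  intro k k' hne
  rw [Function.onFun, Set.disjoint_left]
  intro x hx hx'
  obtain ⟨i, hi⟩ := Function.ne_iff.mp hne
  have h1 := hx i
  have h2 := hx' i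
  simp only [Set.mem_Ioc] at h1 h2
  have hw : (0:ℝ) < 2 * (2:ℝ) ^ (-(ℓ:ℝ)) := by positivity
  have hcast : ∀ (a b : Fin (2^ℓ)), a < b → ((a:ℕ):ℝ) + 1 ≤ ((b:ℕ):ℝ) := by
    intro a b hab
    have : (a:ℕ) + 1 ≤ (b:ℕ) := hab
    exact_mod_cast this
  rcases lt_or_gt_of_ne hi with h | h
  · have := hcast _ _ h
    nlinarith [h1.2, h2.1]
  · have := hcast _ _ h
    nlinarith [h2.2, h1.1]

lemma sum_cube_measures_le {d : ℕ} (μ : Measure (EuclideanSpace ℝ (Fin d)))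
    (n ℓ : ℕ) :
    ∑ k : Fin d → Fin (2 ^ ℓ), μ (scaleSet ((2:ℝ) ^ n) (dyadicCube d ℓ k) ∩ annulus d n) ≤
      μ (annulus d n) := by
  have hc : ((2:ℝ) ^ n) ≠ 0 := by positivity
  set E : (Fin d → Fin (2 ^ ℓ)) → Set (EuclideanSpace ℝ (Fin d)) :=
    fun k => scaleSet ((2:ℝ) ^ n) (dyadicCube d ℓ k) ∩ annulus d n with hE
  have hmeas : ∀ k, MeasurableSet (E k) := fun k =>
    (measurableSet_scaleSet hc (measurableSet_dyadicCube d ℓ k)).inter (measurableSet_annulus d n)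
  have hdisj : Pairwise (Function.onFun Disjoint E) := by
    intro k k' hne
    have h := dyadicCube_disjoint d ℓ hne
    rw [Function.onFun, Set.disjoint_left] at h ⊢
    intro x hx hx'
    simp only [hE, Set.mem_inter_iff, scaleSet_eq_preimage _ hc, Set.mem_preimage] at hx hx'
    exact h hx.1 hx'.1
  calc ∑ k, μ (E k) = ∑' k, μ (E k) := (tsum_fintype _).symm
    _ = μ (⋃ k, E k) := (measure_iUnion hdisj hmeas).symm
    _ ≤ μ (annulus d n) := measure_mono (Set.iUnion_subset fun k => Set.inter_subset_right)

lemma sum_rpow_le_card_mul {ι : Type*} [Fintype ι] [Nonempty ι] (f : ι → ℝ≥0∞) {α : ℝ}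
    (hα0 : 0 < α) (hα1 : α ≤ 1) :
    ∑ k, f k ^ α ≤ (Fintype.card ι : ℝ≥0∞) ^ ((1:ℝ) - α) * (∑ k, f k) ^ α := by
  set n : ℝ≥0∞ := (Fintype.card ι : ℝ≥0∞) with hn
  have hn0 : n ≠ 0 := by
    simp [hn, Fintype.card_ne_zero]
  have hntop : n ≠ ⊤ := by simp [hn]
  have hw : ∑ _k : ι, n⁻¹ = 1 := by
    rw [Finset.sum_const, Finset.card_univ, nsmul_eq_mul, hn, ENNReal.mul_inv_cancel hn0 hntop]
  have key := ENNReal.rpow_arith_mean_le_arith_mean_rpow Finset.univ (fun _ => n⁻¹)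
    (fun k => f k ^ α) hw (p := 1/α) (by rw [le_div_iff₀ hα0, one_mul]; exact hα1)
  have hz : ∀ k, (f k ^ α) ^ (1/α) = f k := by
    intro k
    rw [← ENNReal.rpow_mul, mul_one_div, div_self hα0.ne', ENNReal.rpow_one]
  simp only [hz] at key
  -- key : (∑ n⁻¹ * f k ^ α) ^ (1/α) ≤ ∑ n⁻¹ * f k
  have key2 : ∑ k, n⁻¹ * f k ^ α ≤ (∑ k, n⁻¹ * f k) ^ α := by
    have := ENNReal.rpow_le_rpow key hα0.le
    rwa [← ENNReal.rpow_mul, one_div, inv_mul_cancel₀ hα0.ne', ENNReal.rpow_one] at this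
  have hl : ∑ k, n⁻¹ * f k ^ α = n⁻¹ * ∑ k, f k ^ α := by rw [Finset.mul_sum]
  have hr2 : (∑ k, n⁻¹ * f k) ^ α = n⁻¹ ^ α * (∑ k, f k) ^ α := by
    rw [← Finset.mul_sum, ENNReal.mul_rpow_of_nonneg _ _ hα0.le]
  rw [hl, hr2] at key2
  calc ∑ k, f k ^ α = n * (n⁻¹ * ∑ k, f k ^ α) := by
        rw [← mul_assoc, ENNReal.mul_inv_cancel hn0 hntop, one_mul]
    _ ≤ n * (n⁻¹ ^ α * (∑ k, f k) ^ α) := by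
        exact mul_le_mul_right key2 n
    _ = n ^ ((1:ℝ) - α) * (∑ k, f k) ^ α := by
        rw [← mul_assoc]
        congr 1
        rw [ENNReal.inv_rpow, ← ENNReal.rpow_neg]
        nth_rewrite 1 [← ENNReal.rpow_one n]
        rw [← ENNReal.rpow_add _ _ hn0 hntop, show (1:ℝ) + -α = 1 - α by ring]


lemma abs_coord_le_norm {d : ℕ} (x : EuclideanSpace ℝ (Fin d)) (i : Fin d) : |x i| ≤ ‖x‖ := by
  rw [EuclideanSpace.norm_eq, ← Real.sqrt_sq_eq_abs]
  apply Real.sqrt_le_sqrt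
  have : |x i| ^ 2 ≤ ∑ j, ‖x j‖ ^ 2 := by
    rw [← Real.norm_eq_abs]
    exact Finset.single_le_sum (fun j _ => sq_nonneg ‖x j‖) (Finset.mem_univ i)
  simpa [sq_abs] using this

lemma annulus_toReal_le_one {d : ℕ} (μ : Measure (EuclideanSpace ℝ (Fin d)))
    [IsProbabilityMeasure μ] (n : ℕ) : (μ (annulus d n)).toReal ≤ 1 := by
  have := prob_le_one (μ := μ) (s := annulus d n)
  exact ENNReal.toReal_le_of_le_ofReal zero_le_one (by simpa using this)

lemma annulus_markov {d : ℕ} (μ : Measure (EuclideanSpace ℝ (Fin d)))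
    [IsProbabilityMeasure μ] {q : ℝ} (hq : 0 < q)
    (hmom : ∫⁻ x, ENNReal.ofReal (‖x‖ ^ q) ∂μ < ⊤) (n : ℕ) :
    (μ (annulus d n)).toReal ≤
      (max 1 (2 ^ q * (∫⁻ x, ENNReal.ofReal (‖x‖ ^ q) ∂μ).toReal)) * 2 ^ (-(q * n)) := by
  set Iq := ∫⁻ x, ENNReal.ofReal (‖x‖ ^ q) ∂μ with hIq
  set M : ℝ := max 1 (2 ^ q * Iq.toReal) with hM
  have hM1 : (1:ℝ) ≤ M := le_max_left _ _
  have hIqR : (0:ℝ) ≤ Iq.toReal := ENNReal.toReal_nonneg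
  rcases Nat.eq_zero_or_pos n with h0 | hn1
  · subst h0
    simp only [Nat.cast_zero, mul_zero, neg_zero, Real.rpow_zero, mul_one]
    exact le_trans (annulus_toReal_le_one μ 0) hM1
  · -- n ≥ 1
    set m : ℕ := n - 1 with hm
    have hnm : n = m + 1 := by omega
    have hsub : annulus d n ⊆ {x : EuclideanSpace ℝ (Fin d) |
        ENNReal.ofReal ((2:ℝ) ^ (q * m)) ≤ ENNReal.ofReal (‖x‖ ^ q)} := by
      intro x hx
      have hn0 : n ≠ 0 := by omega
      unfold annulus at hx
      rw [if_neg hn0] at hx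
      obtain ⟨-, hx2⟩ := hx
      simp only [Set.mem_setOf_eq, not_forall] at hx2
      obtain ⟨i, hi⟩ := hx2
      rw [Set.mem_Ioc, not_and_or] at hi
      have habs : (2:ℝ) ^ (n - 1) ≤ |x i| := by
        rcases hi with h | h
        · push_neg at h
          calc (2:ℝ) ^ (n - 1) ≤ -(x i) := by linarith
            _ ≤ |x i| := neg_le_abs _
        · push_neg at h
          exact le_trans h.le (le_abs_self _)
      have hnorm : (2:ℝ) ^ m ≤ ‖x‖ := by
        rw [hm]; exact le_trans habs (abs_coord_le_norm x i)
      have hq2 : ((2:ℝ) ^ m) ^ q ≤ ‖x‖ ^ q := Real.rpow_le_rpow (by positivity) hnorm hq.le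
      have heq : ((2:ℝ) ^ m) ^ q = (2:ℝ) ^ (q * m) := by
        rw [← Real.rpow_natCast 2 m, ← Real.rpow_mul (by norm_num), mul_comm]
      simp only [Set.mem_setOf_eq]
      exact ENNReal.ofReal_le_ofReal (heq ▸ hq2)
    have hmeas : Measurable fun x : EuclideanSpace ℝ (Fin d) =>
        ENNReal.ofReal (‖x‖ ^ q) := by fun_prop
    have cheb := mul_meas_ge_le_lintegral₀ (μ := μ) hmeas.aemeasurable
      (ENNReal.ofReal ((2:ℝ) ^ (q * m)))
    have hε0 : ENNReal.ofReal ((2:ℝ) ^ (q * m)) ≠ 0 := by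
      simp [ENNReal.ofReal_eq_zero, not_le]
      positivity
    have hεtop : ENNReal.ofReal ((2:ℝ) ^ (q * m)) ≠ ⊤ := ENNReal.ofReal_ne_top
    have hle : μ (annulus d n) ≤ Iq * (ENNReal.ofReal ((2:ℝ) ^ (q * m)))⁻¹ := by
      have h1 : μ (annulus d n) ≤ μ {x | ENNReal.ofReal ((2:ℝ) ^ (q * m)) ≤
          ENNReal.ofReal (‖x‖ ^ q)} := measure_mono hsub
      have h2 : μ {x | ENNReal.ofReal ((2:ℝ) ^ (q * m)) ≤ ENNReal.ofReal (‖x‖ ^ q)} ≤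
          Iq / ENNReal.ofReal ((2:ℝ) ^ (q * m)) := by
        rw [ENNReal.le_div_iff_mul_le (Or.inl hε0) (Or.inl hεtop), mul_comm]
        exact cheb
      rw [div_eq_mul_inv] at h2
      exact le_trans h1 h2
    have hrhs_ne : Iq * (ENNReal.ofReal ((2:ℝ) ^ (q * m)))⁻¹ ≠ ⊤ :=
      ENNReal.mul_ne_top hmom.ne (by simp [ENNReal.inv_ne_top, hε0])
    have htr := ENNReal.toReal_mono hrhs_ne hle
    rw [ENNReal.toReal_mul, ENNReal.toReal_inv, ENNReal.toReal_ofReal (by positivity)] at htr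
    calc (μ (annulus d n)).toReal ≤ Iq.toReal * ((2:ℝ) ^ (q * m))⁻¹ := htr
      _ = Iq.toReal * 2 ^ q * 2 ^ (-(q * n)) := by
          rw [← Real.rpow_neg (by norm_num), mul_assoc, ← Real.rpow_add (by norm_num)]
          congr 2
          rw [hnm]; push_cast; ring
      _ ≤ M * 2 ^ (-(q * n)) := by
          have : Iq.toReal * 2 ^ q ≤ M := by
            rw [hM, mul_comm]; exact le_max_right _ _
          exact mul_le_mul_of_nonneg_right this (two_rpow_pos _).le


/-- trivial first-argument geometric bound -/
lemma tsum_min_first (x y a c : ℝ) (hx : 0 ≤ x) (ha : 0 < a) :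
    ∑' n : ℕ, ENNReal.ofReal (min (x * 2 ^ (-(a * n))) (y * 2 ^ (c * n))) ≤
      ENNReal.ofReal (x * (1 - 2 ^ (-a))⁻¹) := by
  have hgeo : (2:ℝ) ^ (-a) < 1 := two_rpow_lt_one ha
  have hgeo0 : (0:ℝ) ≤ 2 ^ (-a) := (two_rpow_pos _).le
  have h1 : ∀ n : ℕ, ENNReal.ofReal (min (x * 2 ^ (-(a * (n:ℝ)))) (y * 2 ^ (c * (n:ℝ)))) ≤
      ENNReal.ofReal x * ENNReal.ofReal ((2:ℝ) ^ (-a)) ^ n := by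
    intro n
    rw [← ENNReal.ofReal_pow hgeo0, ← ENNReal.ofReal_mul hx]
    refine ENNReal.ofReal_le_ofReal (le_trans (min_le_left _ _) ?_)
    rw [← rpow_mul_nat (-a) n, neg_mul]
  calc ∑' n : ℕ, ENNReal.ofReal (min (x * 2 ^ (-(a * (n:ℝ)))) (y * 2 ^ (c * (n:ℝ))))
      ≤ ∑' n : ℕ, ENNReal.ofReal x * ENNReal.ofReal ((2:ℝ) ^ (-a)) ^ n := ENNReal.tsum_le_tsum h1
    _ = ENNReal.ofReal x * (1 - ENNReal.ofReal ((2:ℝ) ^ (-a)))⁻¹ := by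
        rw [ENNReal.tsum_mul_left, ENNReal.tsum_geometric]
    _ ≤ ENNReal.ofReal (x * (1 - 2 ^ (-a))⁻¹) := by
        have h2 : (1 - ENNReal.ofReal ((2:ℝ) ^ (-a)))⁻¹ = ENNReal.ofReal ((1 - 2 ^ (-a))⁻¹) := by
          rw [ENNReal.ofReal_inv_of_pos (by linarith), ← ENNReal.ofReal_one,
            ← ENNReal.ofReal_sub _ hgeo0]
        rw [h2, ← ENNReal.ofReal_mul hx]

/-- the constant for the inner (ℓ) sum -/
def ellC (p α : ℝ) (d : ℕ) : ℝ :=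
  max (max ((1 - 2 ^ ((d:ℝ)*(1-α) - p))⁻¹)
    (2 ^ ((d:ℝ)*(1-α) - p) * (2 ^ ((d:ℝ)*(1-α) - p) - 1)⁻¹ + (1 - 2 ^ (-p))⁻¹))
    (((p * Real.log 2)⁻¹ + 1 + (1 - 2 ^ (-p))⁻¹) * ((Real.log 2)⁻¹ + 2⁻¹))

lemma ellC_pos (p α : ℝ) (d : ℕ) (hp : 0 < p) : 0 < ellC p α d := by
  have h1 : (0:ℝ) < Real.log 2 := Real.log_pos (by norm_num)
  have h2 : (2:ℝ) ^ (-p) < 1 := two_rpow_lt_one hp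
  refine lt_of_lt_of_le ?_ (le_max_right _ _)
  have : (0:ℝ) < (1 - 2 ^ (-p))⁻¹ := inv_pos.mpr (by linarith)
  have : (0:ℝ) < (p * Real.log 2)⁻¹ := inv_pos.mpr (by positivity)
  positivity

/-- inner sum over dyadic scales -/
lemma ell_step (p α u LT : ℝ) (d : ℕ) (hd : 0 < d) (hp : 0 < p) (hα0 : 0 < α) (hα1 : α < 1)
    (hu0 : 0 < u) (m : ℝ) (hm0 : 0 ≤ m) (hm1 : m ≤ 1)
    (hlogu : -Real.log u ≤ LT / 2) (hLT : Real.log 2 ≤ LT) :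
    ∑' ℓ : ℕ, ENNReal.ofReal
        (min (m * 2 ^ (-(p * ℓ))) ((u * m ^ α) * 2 ^ (((d:ℝ)*(1-α) - p) * ℓ))) ≤
      ENNReal.ofReal (ellC p α d * (if p = (1 - α) * (d:ℝ) then LT else 1) *
        (u ^ ((1 - max α (1 - p/(d:ℝ)))/(1-α)) * m ^ (max α (1 - p/(d:ℝ))))) := by
  have hd0 : (0:ℝ) < d := by exact_mod_cast hd
  have h1α : (0:ℝ) < 1 - α := by linarith
  have hlog2 : (0:ℝ) < Real.log 2 := Real.log_pos (by norm_num)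
  have hLT0 : 0 < LT := lt_of_lt_of_le hlog2 hLT
  set cc : ℝ := (d:ℝ)*(1-α) - p with hccdef
  set γ : ℝ := max α (1 - p/(d:ℝ)) with hγdef
  by_cases hm : m = 0
  · subst hm
    have : ∀ ℓ : ℕ, ENNReal.ofReal
        (min ((0:ℝ) * 2 ^ (-(p * ℓ))) ((u * (0:ℝ) ^ α) * 2 ^ (cc * ℓ))) = 0 := by
      intro ℓ
      rw [Real.zero_rpow hα0.ne', mul_zero, zero_mul, zero_mul, min_self]
      exact ENNReal.ofReal_zero
    rw [tsum_congr this, tsum_zero]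
    exact zero_le'
  have hm0' : 0 < m := lt_of_le_of_ne hm0 (Ne.symm hm)
  rcases lt_trichotomy cc 0 with hcc | hcc | hcc
  · -- cc < 0 : γ = α, θ = 1, no log factor
    have hγ : γ = α := by
      rw [hγdef]
      apply max_eq_left
      have : 1 - α < p / d := by
        rw [lt_div_iff₀ hd0]; nlinarith
      linarith
    have hif : ¬ (p = (1 - α) * (d:ℝ)) := by intro h; rw [hccdef] at hcc; nlinarith
    rw [if_neg hif, hγ, show (1 - α)/(1 - α) = (1:ℝ) from div_self h1α.ne', Real.rpow_one]
    refine le_trans (tsum_min_neg m (u * m ^ α) p cc (by positivity) hcc)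
      (ENNReal.ofReal_le_ofReal ?_)
    have hCB : (1 - 2 ^ cc)⁻¹ ≤ ellC p α d :=
      le_trans (le_max_left _ _) (le_max_left _ _)
    calc (u * m ^ α) * (1 - 2 ^ cc)⁻¹ ≤ (u * m ^ α) * ellC p α d :=
          mul_le_mul_of_nonneg_left hCB (by positivity)
      _ = ellC p α d * 1 * (u * m ^ α) := by ring
  · -- cc = 0 : critical case with log factor
    have hpd : 1 - p/(d:ℝ) = α := by
      rw [hccdef] at hcc
      field_simp
      nlinarith
    have hγ : γ = α := by rw [hγdef, hpd, max_self]
    have hif : p = (1 - α) * (d:ℝ) := by rw [hccdef] at hcc; nlinarith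
    rw [if_pos hif, hγ, show (1 - α)/(1 - α) = (1:ℝ) from div_self h1α.ne', Real.rpow_one]
    simp only [hcc]
    refine le_trans (tsum_min_zero m (u * m ^ α) p hm0' (by positivity) hp)
      (ENNReal.ofReal_le_ofReal ?_)
    set L : ℝ := Real.log (m / (u * m ^ α)) with hL
    have hLle : L ≤ LT / 2 := by
      have hrw : m / (u * m ^ α) = m ^ (1 - α) / u := by
        rw [Real.rpow_sub hm0', Real.rpow_one, div_div, mul_comm]
      rw [hL, hrw, Real.log_div (by positivity) hu0.ne']
      have h1 : Real.log (m ^ (1 - α)) ≤ 0 :=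
        Real.log_nonpos (by positivity) (Real.rpow_le_one hm0 hm1 h1α.le)
      linarith
    have hmaxle : max 0 L ≤ LT / 2 := max_le (by linarith) hLle
    have hbound : 1 + max 0 L ≤ LT * ((Real.log 2)⁻¹ + 2⁻¹) := by
      have h1 : (1:ℝ) ≤ LT * (Real.log 2)⁻¹ := by
        rw [← div_eq_mul_inv, le_div_iff₀ hlog2]; linarith
      have h2 : max 0 L ≤ LT * 2⁻¹ := by rw [← div_eq_mul_inv]; exact hmaxle
      linarith [mul_add LT (Real.log 2)⁻¹ 2⁻¹]
    set A : ℝ := (p * Real.log 2)⁻¹ + 1 + (1 - 2 ^ (-p))⁻¹ with hA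
    have hA0 : 0 ≤ A := by
      have h2 : (2:ℝ) ^ (-p) < 1 := two_rpow_lt_one hp
      have : (0:ℝ) ≤ (1 - 2 ^ (-p))⁻¹ := inv_nonneg.mpr (by linarith)
      have : (0:ℝ) ≤ (p * Real.log 2)⁻¹ := inv_nonneg.mpr (by positivity)
      rw [hA]; linarith
    have hY0 : (0:ℝ) ≤ u * m ^ α := by positivity
    calc A * ((u * m ^ α) * (1 + max 0 L))
        ≤ A * ((u * m ^ α) * (LT * ((Real.log 2)⁻¹ + 2⁻¹))) := by
          apply mul_le_mul_of_nonneg_left _ hA0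
          exact mul_le_mul_of_nonneg_left hbound hY0
      _ = (A * ((Real.log 2)⁻¹ + 2⁻¹)) * LT * (u * m ^ α) := by ring
      _ ≤ ellC p α d * LT * (u * m ^ α) := by
          apply mul_le_mul_of_nonneg_right _ hY0
          apply mul_le_mul_of_nonneg_right _ hLT0.le
          exact le_max_right _ _
  · -- cc > 0
    have hγ : γ = 1 - p/(d:ℝ) := by
      rw [hγdef]
      apply max_eq_right
      have : p / d < 1 - α := by rw [div_lt_iff₀ hd0]; nlinarith
      linarith
    have hif : ¬ (p = (1 - α) * (d:ℝ)) := by intro h; rw [hccdef] at hcc; nlinarith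
    rw [if_neg hif, hγ]
    refine le_trans (tsum_min_pos m (u * m ^ α) p cc hm0' (by positivity) hp hcc)
      (ENNReal.ofReal_le_ofReal ?_)
    have hs : p + cc = (d:ℝ) * (1 - α) := by rw [hccdef]; ring
    have hs0 : (0:ℝ) < p + cc := by linarith
    have hprod : m ^ (cc/(p+cc)) * (u * m ^ α) ^ (p/(p+cc)) =
        u ^ ((1 - (1 - p/(d:ℝ)))/(1-α)) * m ^ (1 - p/(d:ℝ)) := by
      rw [Real.mul_rpow hu0.le (by positivity), ← Real.rpow_mul hm0,
        mul_comm (m ^ (cc/(p+cc))), mul_assoc, ← Real.rpow_add hm0']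
      congr 1
      · congr 1
        rw [hs]
        field_simp
        ring
      · congr 1
        rw [hccdef, show p + ((d:ℝ)*(1-α) - p) = (d:ℝ)*(1-α) by ring]
        field_simp
        ring
    rw [hprod, mul_one]
    apply mul_le_mul_of_nonneg_right _ (by positivity)
    exact le_trans (le_max_right _ _) (le_max_left _ _)


/-- the constant for the outer (n) sum -/
def nC (p q α : ℝ) (d : ℕ) (M : ℝ) : ℝ :=
  max (max (M * (1 - 2 ^ (p - q * max α (1 - p/(d:ℝ))))⁻¹)
    ((2 ^ (p - q * max α (1 - p/(d:ℝ))) * (2 ^ (p - q * max α (1 - p/(d:ℝ))) - 1)⁻¹ +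
      (1 - 2 ^ (-(q - p)))⁻¹) * M))
    ((((q - p) * Real.log 2)⁻¹ + 1 + (1 - 2 ^ (-(q - p)))⁻¹) *
      ((1 + (1 - max α (1 - p/(d:ℝ))) * Real.log M) / Real.log 2 +
        (1 - max α (1 - p/(d:ℝ)))/(1 - α)/2) * M)

/-- outer sum over dyadic annuli -/
lemma n_step (p q α T M : ℝ) (d : ℕ) (hd : 0 < d) (hp : 0 < p) (hpq : p < q)
    (hα0 : 0 < α) (hα1 : α < 1) (hM : 1 ≤ M) (hT : 2 < T) :
    ∑' n : ℕ, ENNReal.ofReal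
        (min (M * 2 ^ (-((q - p) * (n:ℝ))))
          (((T ^ (-(1/2) : ℝ)) ^ ((1 - max α (1 - p/(d:ℝ)))/(1 - α)) *
             M ^ (max α (1 - p/(d:ℝ)))) *
            2 ^ ((p - q * max α (1 - p/(d:ℝ))) * (n:ℝ)))) ≤
      ENNReal.ofReal (nC p q α d M *
        (if max α (1 - p/(d:ℝ)) * q = p then Real.log T else 1) *
        T ^ (-((1 - max (max α (1 - p/(d:ℝ))) (p/q)) / (2 * (1 - α))))) := by
  have hd0 : (0:ℝ) < d := by exact_mod_cast hd
  have h1α : (0:ℝ) < 1 - α := by linarith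
  have hq0 : (0:ℝ) < q := by linarith
  have haa : (0:ℝ) < q - p := by linarith
  have hT0 : (0:ℝ) < T := by linarith
  have hT1 : (1:ℝ) < T := by linarith
  have hlogT : (0:ℝ) < Real.log T := Real.log_pos hT1
  have hlog2 : (0:ℝ) < Real.log 2 := Real.log_pos (by norm_num)
  have hlog2T : Real.log 2 ≤ Real.log T := Real.log_le_log (by norm_num) hT.le
  have hM0' : (0:ℝ) < M := by linarith
  have hlogM0 : (0:ℝ) ≤ Real.log M := Real.log_nonneg hM
  set u : ℝ := T ^ (-(1/2) : ℝ) with hudef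
  have hu0 : 0 < u := Real.rpow_pos_of_pos hT0 _
  have hlogu : Real.log u = -(1/2) * Real.log T := Real.log_rpow hT0 _
  set γ : ℝ := max α (1 - p/(d:ℝ)) with hγdef
  have hγα : α ≤ γ := le_max_left _ _
  have hγ0 : 0 < γ := lt_of_lt_of_le hα0 hγα
  have hγ1 : γ < 1 := by
    rw [hγdef]
    apply max_lt hα1
    have : (0:ℝ) < p / d := by positivity
    linarith
  set θ : ℝ := (1 - γ)/(1 - α) with hθdef
  have hθ0 : 0 < θ := by rw [hθdef]; exact div_pos (by linarith) h1α
  set ccn : ℝ := p - q * γ with hccndef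
  have hMγ : M ^ γ ≤ M := by
    calc M ^ γ ≤ M ^ (1:ℝ) := Real.rpow_le_rpow_of_exponent_le hM hγ1.le
      _ = M := Real.rpow_one M
  have hMγ0 : (0:ℝ) < M ^ γ := Real.rpow_pos_of_pos hM0' _
  have hy0 : (0:ℝ) < u ^ θ * M ^ γ := by positivity
  have hupow : ∀ z : ℝ, u ^ z = T ^ (-(1/2) * z) := by
    intro z
    rw [hudef, ← Real.rpow_mul hT0.le]
  rcases lt_trichotomy ccn 0 with hcc | hcc | hcc
  · -- ccn < 0 : subcritical in n, γ ≥ p/q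
    have hqγ : p < q * γ := by rw [hccndef] at hcc; linarith
    have hif : ¬ (γ * q = p) := by intro h; nlinarith
    have hmax : max γ (p/q) = γ := max_eq_left (by rw [div_le_iff₀ hq0]; nlinarith)
    rw [if_neg hif, hmax]
    refine le_trans (tsum_min_neg M (u ^ θ * M ^ γ) (q - p) ccn hy0.le hcc)
      (ENNReal.ofReal_le_ofReal ?_)
    have hgeo : (2:ℝ) ^ ccn < 1 := by
      have := two_rpow_lt_one (a := -ccn) (by linarith); rwa [neg_neg] at this
    have hinv0 : (0:ℝ) ≤ (1 - 2 ^ ccn)⁻¹ := inv_nonneg.mpr (by linarith)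
    have hueq : u ^ θ = T ^ (-((1 - γ) / (2 * (1 - α)))) := by
      rw [hupow θ, hθdef]
      congr 1
      field_simp
    have hTe0 : (0:ℝ) ≤ T ^ (-((1 - γ) / (2 * (1 - α)))) :=
      (Real.rpow_pos_of_pos hT0 _).le
    calc (u ^ θ * M ^ γ) * (1 - 2 ^ ccn)⁻¹
        = (M ^ γ * (1 - 2 ^ ccn)⁻¹) * T ^ (-((1 - γ) / (2 * (1 - α)))) := by
          rw [hueq]; ring
      _ ≤ (M * (1 - 2 ^ ccn)⁻¹) * T ^ (-((1 - γ) / (2 * (1 - α)))) := by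
          apply mul_le_mul_of_nonneg_right _ hTe0
          exact mul_le_mul_of_nonneg_right hMγ hinv0
      _ ≤ nC p q α d M * 1 * T ^ (-((1 - γ) / (2 * (1 - α)))) := by
          apply mul_le_mul_of_nonneg_right _ hTe0
          rw [mul_one]
          exact le_trans (le_max_left _ _) (le_max_left _ _)
  · -- ccn = 0 : critical case, log factor
    have hpqγ : p = q * γ := by rw [hccndef] at hcc; linarith
    have hif : γ * q = p := by linarith [mul_comm q γ]
    have hmax : max γ (p/q) = γ := by
      rw [hpqγ, mul_comm, mul_div_assoc, div_self hq0.ne', mul_one, max_self]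
    rw [if_pos hif, hmax]
    simp only [hcc]
    refine le_trans (tsum_min_zero M (u ^ θ * M ^ γ) (q - p) hM0' hy0 haa)
      (ENNReal.ofReal_le_ofReal ?_)
    set L : ℝ := Real.log (M / (u ^ θ * M ^ γ)) with hLdef
    have hLeq : L = (1 - γ) * Real.log M + 1/2 * θ * Real.log T := by
      rw [hLdef, Real.log_div hM0'.ne' hy0.ne',
        Real.log_mul (Real.rpow_pos_of_pos hu0 θ).ne' hMγ0.ne',
        Real.log_rpow hu0, Real.log_rpow hM0', hlogu]
      ring
    have hL0 : 0 ≤ L := by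
      rw [hLeq]
      have h1 : 0 ≤ (1 - γ) * Real.log M := mul_nonneg (by linarith) hlogM0
      nlinarith
    have hmaxL : max 0 L = L := max_eq_right hL0
    set CM : ℝ := (1 + (1 - γ) * Real.log M) / Real.log 2 + θ/2 with hCM
    have hbound : 1 + max 0 L ≤ CM * Real.log T := by
      rw [hmaxL, hLeq, hCM]
      have h1 : (1:ℝ) ≤ Real.log T / Real.log 2 := (one_le_div hlog2).mpr hlog2T
      have h2 : 1 + (1 - γ) * Real.log M ≤
          (1 + (1 - γ) * Real.log M) * (Real.log T / Real.log 2) := by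
        nth_rewrite 1 [← mul_one (1 + (1 - γ) * Real.log M)]
        apply mul_le_mul_of_nonneg_left h1
        nlinarith [mul_nonneg (show (0:ℝ) ≤ 1 - γ by linarith) hlogM0]
      have h3 : ((1 + (1 - γ) * Real.log M) / Real.log 2 + θ/2) * Real.log T =
          (1 + (1 - γ) * Real.log M) * (Real.log T / Real.log 2) + θ/2 * Real.log T := by
        ring
      rw [h3]
      linarith
    set K0 : ℝ := ((q - p) * Real.log 2)⁻¹ + 1 + (1 - 2 ^ (-(q - p)))⁻¹ with hK0
    have hK00 : 0 ≤ K0 := by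
      have hg : (2:ℝ) ^ (-(q - p)) < 1 := two_rpow_lt_one haa
      have h1 : (0:ℝ) ≤ (1 - 2 ^ (-(q - p)))⁻¹ := inv_nonneg.mpr (by linarith)
      have h2 : (0:ℝ) ≤ ((q - p) * Real.log 2)⁻¹ := inv_nonneg.mpr (by positivity)
      rw [hK0]; linarith
    have hueq : u ^ θ = T ^ (-((1 - γ) / (2 * (1 - α)))) := by
      rw [hupow θ, hθdef]
      congr 1
      field_simp
    have hTe0 : (0:ℝ) ≤ T ^ (-((1 - γ) / (2 * (1 - α)))) :=
      (Real.rpow_pos_of_pos hT0 _).le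
    have hCM0 : 0 ≤ CM := by
      rw [hCM]
      have : 0 ≤ (1 + (1 - γ) * Real.log M) / Real.log 2 := by
        apply div_nonneg _ hlog2.le
        nlinarith [mul_nonneg (show (0:ℝ) ≤ 1 - γ by linarith) hlogM0]
      have : 0 ≤ θ/2 := by linarith
      linarith
    calc K0 * ((u ^ θ * M ^ γ) * (1 + max 0 L))
        ≤ K0 * ((u ^ θ * M ^ γ) * (CM * Real.log T)) := by
          apply mul_le_mul_of_nonneg_left _ hK00
          exact mul_le_mul_of_nonneg_left hbound hy0.le
      _ = (K0 * CM * M ^ γ) * Real.log T * T ^ (-((1 - γ) / (2 * (1 - α)))) := by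
          rw [hueq]; ring
      _ ≤ (K0 * CM * M) * Real.log T * T ^ (-((1 - γ) / (2 * (1 - α)))) := by
          apply mul_le_mul_of_nonneg_right _ hTe0
          apply mul_le_mul_of_nonneg_right _ hlogT.le
          exact mul_le_mul_of_nonneg_left hMγ (mul_nonneg hK00 hCM0)
      _ ≤ nC p q α d M * Real.log T * T ^ (-((1 - γ) / (2 * (1 - α)))) := by
          apply mul_le_mul_of_nonneg_right _ hTe0
          apply mul_le_mul_of_nonneg_right _ hlogT.le
          exact le_max_right _ _
  · -- ccn > 0 : supercritical, p/q ≥ γ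
    have hqγ : q * γ < p := by rw [hccndef] at hcc; linarith
    have hif : ¬ (γ * q = p) := by intro h; nlinarith
    have hmax : max γ (p/q) = p/q := max_eq_right (by rw [le_div_iff₀ hq0]; nlinarith)
    rw [if_neg hif, hmax]
    refine le_trans (tsum_min_pos M (u ^ θ * M ^ γ) (q - p) ccn hM0' hy0 haa hcc)
      (ENNReal.ofReal_le_ofReal ?_)
    have hs' : q - p + ccn = q * (1 - γ) := by rw [hccndef]; ring
    have hs'0 : (0:ℝ) < q - p + ccn := by rw [hs']; exact mul_pos hq0 (by linarith)
    have hsplit : (u ^ θ * M ^ γ) ^ ((q - p)/(q - p + ccn)) =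
        u ^ (θ * ((q - p)/(q - p + ccn))) * M ^ (γ * ((q - p)/(q - p + ccn))) := by
      rw [Real.mul_rpow (Real.rpow_pos_of_pos hu0 θ).le hMγ0.le,
        ← Real.rpow_mul hu0.le, ← Real.rpow_mul hM0'.le]
    have hMcomb : M ^ (ccn/(q - p + ccn)) * M ^ (γ * ((q - p)/(q - p + ccn))) =
        M ^ (p/q) := by
      rw [← Real.rpow_add hM0']
      congr 1
      rw [hccndef, show q - p + (p - q*γ) = q*(1-γ) by ring]
      have hne1 : q * (1 - γ) ≠ 0 := (mul_pos hq0 (by linarith : (0:ℝ) < 1 - γ)).ne'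
      have hne2 : (1:ℝ) - γ ≠ 0 := (by linarith : (0:ℝ) < 1 - γ).ne'
      field_simp
      ring
    have hueq2 : u ^ (θ * ((q - p)/(q - p + ccn))) =
        T ^ (-((1 - p/q) / (2 * (1 - α)))) := by
      rw [hupow]
      congr 1
      rw [hθdef, hccndef, show q - p + (p - q*γ) = q*(1-γ) by ring]
      have hne1 : q * (1 - γ) ≠ 0 := (mul_pos hq0 (by linarith : (0:ℝ) < 1 - γ)).ne'
      have hne2 : (1:ℝ) - γ ≠ 0 := (by linarith : (0:ℝ) < 1 - γ).ne'
      field_simp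
    have hTe0 : (0:ℝ) ≤ T ^ (-((1 - p/q) / (2 * (1 - α)))) :=
      (Real.rpow_pos_of_pos hT0 _).le
    have hMpq : M ^ (p/q) ≤ M := by
      calc M ^ (p/q) ≤ M ^ (1:ℝ) := by
            apply Real.rpow_le_rpow_of_exponent_le hM
            rw [div_le_one hq0]; linarith
        _ = M := Real.rpow_one M
    have hconst0 : (0:ℝ) ≤ 2 ^ ccn * (2 ^ ccn - 1)⁻¹ + (1 - 2 ^ (-(q - p)))⁻¹ := by
      have h1 : (1:ℝ) < 2 ^ ccn := by
        rw [show (1:ℝ) = (2:ℝ) ^ (0:ℝ) by simp]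
        exact Real.rpow_lt_rpow_left_iff (by norm_num) |>.mpr hcc
      have hg : (2:ℝ) ^ (-(q - p)) < 1 := two_rpow_lt_one haa
      have h2 : (0:ℝ) ≤ (1 - 2 ^ (-(q - p)))⁻¹ := inv_nonneg.mpr (by linarith)
      have h3 : (0:ℝ) ≤ 2 ^ ccn * (2 ^ ccn - 1)⁻¹ :=
        mul_nonneg (by positivity) (inv_nonneg.mpr (by linarith))
      linarith
    calc (2 ^ ccn * (2 ^ ccn - 1)⁻¹ + (1 - 2 ^ (-(q - p)))⁻¹) *
          (M ^ (ccn/(q - p + ccn)) * (u ^ θ * M ^ γ) ^ ((q - p)/(q - p + ccn)))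
        = (2 ^ ccn * (2 ^ ccn - 1)⁻¹ + (1 - 2 ^ (-(q - p)))⁻¹) *
          (M ^ (p/q) * T ^ (-((1 - p/q) / (2 * (1 - α))))) := by
          rw [hsplit, hueq2, ← hMcomb]
          ring
      _ ≤ (2 ^ ccn * (2 ^ ccn - 1)⁻¹ + (1 - 2 ^ (-(q - p)))⁻¹) * M *
            T ^ (-((1 - p/q) / (2 * (1 - α)))) := by
          rw [mul_assoc]
          apply mul_le_mul_of_nonneg_left _ hconst0
          exact mul_le_mul_of_nonneg_right hMpq hTe0
      _ ≤ nC p q α d M * 1 * T ^ (-((1 - p/q) / (2 * (1 - α)))) := by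
          rw [mul_one]
          apply mul_le_mul_of_nonneg_right _ hTe0
          exact le_trans (le_max_right _ _) (le_max_left _ _)


lemma ofReal_min' (a b : ℝ) :
    ENNReal.ofReal (min a b) = min (ENNReal.ofReal a) (ENNReal.ofReal b) :=
  Monotone.map_min (fun _ _ h => ENNReal.ofReal_le_ofReal h)

lemma mul_min_nonneg (a b c : ℝ) (ha : 0 ≤ a) : a * min b c = min (a*b) (a*c) := by
  rcases le_total b c with h | h
  · rw [min_eq_left h, min_eq_left (mul_le_mul_of_nonneg_left h ha)]
  · rw [min_eq_right h, min_eq_right (mul_le_mul_of_nonneg_left h ha)]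

lemma card_fun_rpow (d ℓ : ℕ) (β : ℝ) :
    ((Fintype.card (Fin d → Fin (2 ^ ℓ)) : ℝ≥0∞)) ^ β =
      ENNReal.ofReal (2 ^ ((((ℓ * d : ℕ)):ℝ) * β)) := by
  rw [Fintype.card_fun, Fintype.card_fin, Fintype.card_fin, ← pow_mul,
    Nat.cast_pow, Nat.cast_ofNat,
    ← ENNReal.rpow_natCast (2:ℝ≥0∞) (ℓ*d), ← ENNReal.rpow_mul,
    show (2:ℝ≥0∞) = ENNReal.ofReal 2 by simp,
    ENNReal.ofReal_rpow_of_pos (by norm_num)]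

/-- **Lemma 3.1.**  Let `μ` be a probability measure on `ℝ^d` with `μ(|·|^q) < ∞` for some
`q > p > 0` and let `α ∈ (0,1)`.  With `γ := max{α, 1 - p/d}`, the quantity
`𝒦_α(T) = ∑_n 2^{pn} ∑_ℓ 2^{-pℓ} ∑_{F∈𝒫_ℓ} min{μ(2ⁿF ∩ B_n), T^{-1/2} μ(2ⁿF ∩ B_n)^α}`
satisfies `𝒦_α(T) ≤ C T^{-(1 - max{γ, p/q})/(2(1-α))} · A · B` for all `T > 2`. -/
theorem dyadic_minimum_sum_bound {d : ℕ} (hd : 0 < d)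
    (μ : Measure (EuclideanSpace ℝ (Fin d))) [IsProbabilityMeasure μ]
    (p q α : ℝ) (hp : 0 < p) (hq : p < q) (hα0 : 0 < α) (hα1 : α < 1)
    (hmom : ∫⁻ x, ENNReal.ofReal (‖x‖ ^ q) ∂μ < ⊤) :
    ∃ C > (0:ℝ), ∀ T : ℝ, 2 < T →
      (∑' n : ℕ, ENNReal.ofReal ((2 : ℝ) ^ (p * n)) *
        ∑' ℓ : ℕ, ENNReal.ofReal ((2 : ℝ) ^ (-(p * ℓ))) *
          ∑ k : Fin d → Fin (2 ^ ℓ),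
            min (μ (scaleSet ((2:ℝ) ^ n) (dyadicCube d ℓ k) ∩ annulus d n))
              (ENNReal.ofReal (T ^ (-(1/2) : ℝ)) *
                μ (scaleSet ((2:ℝ) ^ n) (dyadicCube d ℓ k) ∩ annulus d n) ^ α)) ≤
      ENNReal.ofReal (C *
        T ^ (-((1 - max (max α (1 - p / (d : ℝ))) (p / q)) / (2 * (1 - α)))) *
        (if max α (1 - p / (d : ℝ)) * q = p then Real.log T else 1) *
        (if p = (1 - α) * (d : ℝ) then Real.log T else 1)) := by
  classical
  have hd0 : (0:ℝ) < d := by exact_mod_cast hd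
  have h1α : (0:ℝ) < 1 - α := by linarith
  have hq0 : (0:ℝ) < q := by linarith
  have hlog2 : (0:ℝ) < Real.log 2 := Real.log_pos (by norm_num)
  set Iq : ℝ≥0∞ := ∫⁻ x, ENNReal.ofReal (‖x‖ ^ q) ∂μ with hIqdef
  set M : ℝ := max 1 (2 ^ q * Iq.toReal) with hMdef
  have hM1 : (1:ℝ) ≤ M := le_max_left _ _
  have hM0' : (0:ℝ) < M := by linarith
  set C0 : ℝ := (1 - 2 ^ (-p))⁻¹ with hC0def
  have hC00 : 0 < C0 := by
    have := two_rpow_lt_one hp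
    exact inv_pos.mpr (by linarith)
  set D : ℝ := max (C0 / Real.log 2) (ellC p α d) with hDdef
  have hD0 : 0 < D := lt_of_lt_of_le (by positivity) (le_max_left _ _)
  have hnC0 : 0 < nC p q α d M := by
    refine lt_of_lt_of_le ?_ (le_max_right _ _)
    have haa : (0:ℝ) < q - p := by linarith
    have hg : (2:ℝ) ^ (-(q - p)) < 1 := two_rpow_lt_one haa
    have h1 : (0:ℝ) < (1 - 2 ^ (-(q - p)))⁻¹ := inv_pos.mpr (by linarith)
    have h2 : (0:ℝ) < ((q - p) * Real.log 2)⁻¹ := inv_pos.mpr (by positivity)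
    have hγ1 : max α (1 - p/(d:ℝ)) < 1 := by
      apply max_lt hα1
      have : (0:ℝ) < p / d := by positivity
      linarith
    have hlogM0 : (0:ℝ) ≤ Real.log M := Real.log_nonneg hM1
    have h3 : (0:ℝ) < (1 + (1 - max α (1 - p/(d:ℝ))) * Real.log M) / Real.log 2 := by
      apply div_pos _ hlog2
      nlinarith [mul_nonneg (show (0:ℝ) ≤ 1 - max α (1 - p/(d:ℝ)) by linarith) hlogM0]
    have h4 : (0:ℝ) < (1 - max α (1 - p/(d:ℝ)))/(1 - α)/2 := by
      apply div_pos (div_pos (by linarith) h1α) (by norm_num)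
    have h5 : (0:ℝ) < ((q - p) * Real.log 2)⁻¹ + 1 + (1 - 2 ^ (-(q - p)))⁻¹ := by linarith
    positivity
  refine ⟨D * nC p q α d M, by positivity, ?_⟩
  intro T hT
  have hT0 : (0:ℝ) < T := by linarith
  have hT1 : (1:ℝ) < T := by linarith
  have hlogT : (0:ℝ) < Real.log T := Real.log_pos hT1
  have hlog2T : Real.log 2 ≤ Real.log T := Real.log_le_log (by norm_num) hT.le
  set u : ℝ := T ^ (-(1/2) : ℝ) with hudef
  have hu0 : 0 < u := Real.rpow_pos_of_pos hT0 _
  have hlogu : Real.log u = -(1/2) * Real.log T := Real.log_rpow hT0 _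
  set γ : ℝ := max α (1 - p/(d:ℝ)) with hγdef
  have hγα : α ≤ γ := le_max_left _ _
  have hγ0 : 0 < γ := lt_of_lt_of_le hα0 hγα
  have hγ1 : γ < 1 := by
    rw [hγdef]
    apply max_lt hα1
    have : (0:ℝ) < p / d := by positivity
    linarith
  set θ : ℝ := (1 - γ)/(1 - α) with hθdef
  have hθ0 : 0 < θ := div_pos (by linarith) h1α
  set BF : ℝ := if p = (1 - α) * (d:ℝ) then Real.log T else 1 with hBFdef
  have hBFge : Real.log 2 ≤ BF := by
    rw [hBFdef]
    split
    · exact hlog2T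
    · linarith [Real.log_two_lt_d9]
  have hBF0 : 0 < BF := lt_of_lt_of_le hlog2 hBFge
  set mn : ℕ → ℝ := fun n => (μ (annulus d n)).toReal with hmndef
  have hmn0 : ∀ n, 0 ≤ mn n := fun n => ENNReal.toReal_nonneg
  have hmn1 : ∀ n, mn n ≤ 1 := fun n => annulus_toReal_le_one μ n
  have hmark : ∀ n : ℕ, mn n ≤ M * 2 ^ (-(q * n)) := fun n => annulus_markov μ hq0 hmom n
  set cc : ℝ := (d:ℝ)*(1-α) - p with hccdef
  set ccn : ℝ := p - q * γ with hccndef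
  -- Step A : per (n, ℓ) bound on the cube sum
  have stepA : ∀ n ℓ : ℕ,
      ENNReal.ofReal ((2 : ℝ) ^ (-(p * ℓ))) *
        ∑ k : Fin d → Fin (2 ^ ℓ),
          min (μ (scaleSet ((2:ℝ) ^ n) (dyadicCube d ℓ k) ∩ annulus d n))
            (ENNReal.ofReal (T ^ (-(1/2) : ℝ)) *
              μ (scaleSet ((2:ℝ) ^ n) (dyadicCube d ℓ k) ∩ annulus d n) ^ α) ≤
      ENNReal.ofReal (min (mn n * 2 ^ (-(p * ℓ))) ((u * mn n ^ α) * 2 ^ (cc * ℓ))) := by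
    intro n ℓ
    haveI : Nonempty (Fin d → Fin (2 ^ ℓ)) := ⟨fun _ => ⟨0, Nat.two_pow_pos ℓ⟩⟩
    set E : (Fin d → Fin (2 ^ ℓ)) → Set (EuclideanSpace ℝ (Fin d)) :=
      fun k => scaleSet ((2:ℝ) ^ n) (dyadicCube d ℓ k) ∩ annulus d n with hEdef
    have hsum1 : ∑ k, μ (E k) ≤ ENNReal.ofReal (mn n) := by
      rw [hmndef, ENNReal.ofReal_toReal (measure_ne_top μ _)]
      exact sum_cube_measures_le μ n ℓ
    have hsum2 : ∑ k, μ (E k) ^ α ≤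
        (Fintype.card (Fin d → Fin (2 ^ ℓ)) : ℝ≥0∞) ^ ((1:ℝ) - α) *
          ENNReal.ofReal (mn n) ^ α := by
      refine le_trans (sum_rpow_le_card_mul (fun k => μ (E k)) hα0 hα1.le) ?_
      exact mul_le_mul_right (ENNReal.rpow_le_rpow hsum1 hα0.le) _
    have hmin : ∑ k, min (μ (E k)) (ENNReal.ofReal u * μ (E k) ^ α) ≤
        min (ENNReal.ofReal (mn n))
          (ENNReal.ofReal (u * (2 ^ ((((ℓ * d : ℕ)):ℝ) * (1 - α)) * mn n ^ α))) := by
      refine le_min ?_ ?_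
      · refine le_trans (Finset.sum_le_sum fun k _ => min_le_left _ _) hsum1
      · refine le_trans (Finset.sum_le_sum fun k _ => min_le_right _ _) ?_
        rw [← Finset.mul_sum]
        calc ENNReal.ofReal u * ∑ k, μ (E k) ^ α
            ≤ ENNReal.ofReal u *
              ((Fintype.card (Fin d → Fin (2 ^ ℓ)) : ℝ≥0∞) ^ ((1:ℝ) - α) *
                ENNReal.ofReal (mn n) ^ α) := mul_le_mul_right hsum2 _
          _ = ENNReal.ofReal (u * (2 ^ ((((ℓ * d : ℕ)):ℝ) * (1 - α)) * mn n ^ α)) := by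
              rw [card_fun_rpow, ENNReal.ofReal_rpow_of_nonneg (hmn0 n) hα0.le,
                ← ENNReal.ofReal_mul (by positivity), ← ENNReal.ofReal_mul hu0.le]
    calc ENNReal.ofReal ((2 : ℝ) ^ (-(p * ℓ))) *
          ∑ k, min (μ (E k)) (ENNReal.ofReal (T ^ (-(1/2) : ℝ)) * μ (E k) ^ α)
        ≤ ENNReal.ofReal ((2 : ℝ) ^ (-(p * ℓ))) *
          min (ENNReal.ofReal (mn n))
            (ENNReal.ofReal (u * (2 ^ ((((ℓ * d : ℕ)):ℝ) * (1 - α)) * mn n ^ α))) := by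
          exact mul_le_mul_right hmin _
      _ = ENNReal.ofReal (min (mn n * 2 ^ (-(p * ℓ))) ((u * mn n ^ α) * 2 ^ (cc * ℓ))) := by
          rw [← ofReal_min', ← ENNReal.ofReal_mul (two_rpow_pos _).le,
            mul_min_nonneg _ _ _ (two_rpow_pos _).le]
          congr 2
          · ring
          · rw [show cc * ℓ = (((ℓ * d : ℕ)):ℝ) * (1 - α) + (-(p * ℓ)) by
              rw [hccdef]; push_cast; ring,
              Real.rpow_add (by norm_num : (0:ℝ) < 2)]
            ring
  -- Step B : the inner sum over ℓ
  have stepB : ∀ n : ℕ,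
      (∑' ℓ : ℕ, ENNReal.ofReal ((2 : ℝ) ^ (-(p * ℓ))) *
        ∑ k : Fin d → Fin (2 ^ ℓ),
          min (μ (scaleSet ((2:ℝ) ^ n) (dyadicCube d ℓ k) ∩ annulus d n))
            (ENNReal.ofReal (T ^ (-(1/2) : ℝ)) *
              μ (scaleSet ((2:ℝ) ^ n) (dyadicCube d ℓ k) ∩ annulus d n) ^ α)) ≤
      ENNReal.ofReal (min (C0 * mn n) (ellC p α d * BF * (u ^ θ * mn n ^ γ))) := by
    intro n
    have h1 : (∑' ℓ : ℕ, ENNReal.ofReal ((2 : ℝ) ^ (-(p * ℓ))) *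
        ∑ k : Fin d → Fin (2 ^ ℓ),
          min (μ (scaleSet ((2:ℝ) ^ n) (dyadicCube d ℓ k) ∩ annulus d n))
            (ENNReal.ofReal (T ^ (-(1/2) : ℝ)) *
              μ (scaleSet ((2:ℝ) ^ n) (dyadicCube d ℓ k) ∩ annulus d n) ^ α)) ≤
        ∑' ℓ : ℕ, ENNReal.ofReal
          (min (mn n * 2 ^ (-(p * ℓ))) ((u * mn n ^ α) * 2 ^ (cc * ℓ))) :=
      ENNReal.tsum_le_tsum (fun ℓ => stepA n ℓ)
    rw [ofReal_min']
    refine le_trans h1 (le_min ?_ ?_)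
    · exact le_trans (tsum_min_first (mn n) (u * mn n ^ α) p cc (hmn0 n) hp)
        (ENNReal.ofReal_le_ofReal (by rw [hC0def]; ring_nf; exact le_refl _))
    · exact ell_step p α u (Real.log T) d hd hp hα0 hα1 hu0 (mn n) (hmn0 n) (hmn1 n)
        (by rw [hlogu]; ring_nf; exact le_refl _) hlog2T
  -- Step C : per-n real estimate
  have hellC0 : 0 < ellC p α d := ellC_pos p α d hp
  have hC0DBF : C0 ≤ D * BF := by
    calc C0 = (C0/Real.log 2) * Real.log 2 := (div_mul_cancel₀ _ hlog2.ne').symm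
      _ ≤ D * BF := mul_le_mul (le_max_left _ _) hBFge hlog2.le hD0.le
  have hellCD : ellC p α d ≤ D := le_max_right _ _
  have stepC : ∀ n : ℕ,
      (2:ℝ) ^ (p * n) * min (C0 * mn n) (ellC p α d * BF * (u ^ θ * mn n ^ γ)) ≤
      (D * BF) * min (M * 2 ^ (-((q - p) * (n:ℝ))))
        ((u ^ θ * M ^ γ) * 2 ^ (ccn * (n:ℝ))) := by
    intro n
    have hb1 : (2:ℝ) ^ (p * n) * (C0 * mn n) ≤
        (D * BF) * (M * 2 ^ (-((q - p) * (n:ℝ)))) := by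
      calc (2:ℝ) ^ (p * n) * (C0 * mn n)
          ≤ (2:ℝ) ^ (p * n) * (C0 * (M * 2 ^ (-(q * n)))) := by
            apply mul_le_mul_of_nonneg_left _ (two_rpow_pos _).le
            exact mul_le_mul_of_nonneg_left (hmark n) hC00.le
        _ = C0 * (M * 2 ^ (-((q - p) * (n:ℝ)))) := by
            rw [show -((q - p) * (n:ℝ)) = p * n + -(q * n) by ring,
              Real.rpow_add (by norm_num : (0:ℝ) < 2)]
            ring
        _ ≤ (D * BF) * (M * 2 ^ (-((q - p) * (n:ℝ)))) :=
            mul_le_mul_of_nonneg_right hC0DBF (by positivity)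
    have hb2 : (2:ℝ) ^ (p * n) * (ellC p α d * BF * (u ^ θ * mn n ^ γ)) ≤
        (D * BF) * ((u ^ θ * M ^ γ) * 2 ^ (ccn * (n:ℝ))) := by
      have hmnγ : mn n ^ γ ≤ M ^ γ * 2 ^ ((-(q * (n:ℝ))) * γ) := by
        calc mn n ^ γ ≤ (M * 2 ^ (-(q * n))) ^ γ :=
              Real.rpow_le_rpow (hmn0 n) (hmark n) hγ0.le
          _ = M ^ γ * 2 ^ ((-(q * (n:ℝ))) * γ) := by
              rw [Real.mul_rpow hM0'.le (two_rpow_pos _).le,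
                ← Real.rpow_mul (by norm_num : (0:ℝ) ≤ 2)]
      calc (2:ℝ) ^ (p * n) * (ellC p α d * BF * (u ^ θ * mn n ^ γ))
          ≤ (2:ℝ) ^ (p * n) * (ellC p α d * BF * (u ^ θ * (M ^ γ * 2 ^ ((-(q * (n:ℝ))) * γ)))) := by
            apply mul_le_mul_of_nonneg_left _ (two_rpow_pos _).le
            apply mul_le_mul_of_nonneg_left _ (mul_nonneg hellC0.le hBF0.le)
            exact mul_le_mul_of_nonneg_left hmnγ (Real.rpow_pos_of_pos hu0 θ).le
        _ = (ellC p α d * BF) * ((u ^ θ * M ^ γ) * 2 ^ (ccn * (n:ℝ))) := by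
            rw [show ccn * (n:ℝ) = p * n + (-(q * (n:ℝ))) * γ by rw [hccndef]; ring,
              Real.rpow_add (by norm_num : (0:ℝ) < 2)]
            ring
        _ ≤ (D * BF) * ((u ^ θ * M ^ γ) * 2 ^ (ccn * (n:ℝ))) := by
            apply mul_le_mul_of_nonneg_right _ (by positivity)
            exact mul_le_mul_of_nonneg_right hellCD hBF0.le
    rw [mul_min_nonneg _ _ _ (two_rpow_pos _).le,
      mul_min_nonneg _ _ _ (mul_nonneg hD0.le hBF0.le)]
    exact min_le_min hb1 hb2
  -- Step D : assemble
  calc ∑' n : ℕ, ENNReal.ofReal ((2 : ℝ) ^ (p * n)) *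
        ∑' ℓ : ℕ, ENNReal.ofReal ((2 : ℝ) ^ (-(p * ℓ))) *
          ∑ k : Fin d → Fin (2 ^ ℓ),
            min (μ (scaleSet ((2:ℝ) ^ n) (dyadicCube d ℓ k) ∩ annulus d n))
              (ENNReal.ofReal (T ^ (-(1/2) : ℝ)) *
                μ (scaleSet ((2:ℝ) ^ n) (dyadicCube d ℓ k) ∩ annulus d n) ^ α)
      ≤ ∑' n : ℕ, ENNReal.ofReal ((2 : ℝ) ^ (p * n)) *
          ENNReal.ofReal (min (C0 * mn n) (ellC p α d * BF * (u ^ θ * mn n ^ γ))) :=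
        ENNReal.tsum_le_tsum fun n => mul_le_mul_right (stepB n) _
    _ = ∑' n : ℕ, ENNReal.ofReal ((2:ℝ) ^ (p * n) *
          min (C0 * mn n) (ellC p α d * BF * (u ^ θ * mn n ^ γ))) :=
        tsum_congr fun n => (ENNReal.ofReal_mul (two_rpow_pos _).le).symm
    _ ≤ ∑' n : ℕ, ENNReal.ofReal ((D * BF) *
          min (M * 2 ^ (-((q - p) * (n:ℝ)))) ((u ^ θ * M ^ γ) * 2 ^ (ccn * (n:ℝ)))) :=
        ENNReal.tsum_le_tsum fun n => ENNReal.ofReal_le_ofReal (stepC n)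
    _ = ENNReal.ofReal (D * BF) * ∑' n : ℕ, ENNReal.ofReal
          (min (M * 2 ^ (-((q - p) * (n:ℝ)))) ((u ^ θ * M ^ γ) * 2 ^ (ccn * (n:ℝ)))) := by
        rw [← ENNReal.tsum_mul_left]
        exact tsum_congr fun n => ENNReal.ofReal_mul (mul_nonneg hD0.le hBF0.le)
    _ ≤ ENNReal.ofReal (D * BF) * ENNReal.ofReal (nC p q α d M *
          (if γ * q = p then Real.log T else 1) *
          T ^ (-((1 - max γ (p/q)) / (2 * (1 - α))))) :=
        mul_le_mul_right (n_step p q α T M d hd hp hq hα0 hα1 hM1 hT) _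
    _ ≤ ENNReal.ofReal (D * nC p q α d M *
          T ^ (-((1 - max γ (p/q)) / (2 * (1 - α)))) *
          (if γ * q = p then Real.log T else 1) * BF) := by
        rw [← ENNReal.ofReal_mul (mul_nonneg hD0.le hBF0.le)]
        apply ENNReal.ofReal_le_ofReal
        apply le_of_eq
        ring
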